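/- In the N-currency model df_j = μ_j f_j dt + σ_j f_j dW̃_j with correlations ρ_{lk}, the linear system for the N unknowns (market prices of risk γ_1,…,γ_{N−1} and the pseudo-currency rate r_X) obtained from requiring all N discounted assets S_{c_i/X} B_i / B_X to be local martingales has a unique solution, with r_X = (1/N)Σ_{i=1}^N r_i + (1/(2N))(1 − 1/N) Σ_{i=1}^{N−1} σ_i² − (1/N²) Σ_{k=1}^{N−1} Σ_{j=1}^{k−1} σ_j σ_k ρ_{jk}. -/
import Mathlib


open Finset

/-- Unique solvability of a lower-triangular linear system with nonzero diagonal. -/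
lemma stmt_10_tri {n : ℕ} (M : Matrix (Fin n) (Fin n) ℝ)
    (hdiag : ∀ i, M i i ≠ 0) (htri : ∀ i j : Fin n, i < j → M i j = 0)
    (b : Fin n → ℝ) : ∃! γ : Fin n → ℝ, M.mulVec γ = b := by
  have hbt : M.BlockTriangular ⇑OrderDual.toDual := by
    intro i j hij
    exact htri i j hij
  have hdet : IsUnit M.det := by
    rw [Matrix.det_of_lowerTriangular M hbt]
    exact isUnit_iff_ne_zero.2 (Finset.prod_ne_zero_iff.2 fun i _ => hdiag i)
  refine ⟨M⁻¹.mulVec b, ?_, ?_⟩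
  · show M.mulVec (M⁻¹.mulVec b) = b
    rw [Matrix.mulVec_mulVec, Matrix.mul_nonsing_inv _ hdet, Matrix.one_mulVec]
  · intro y hy
    have hy' : M.mulVec y = b := hy
    rw [← hy', Matrix.mulVec_mulVec, Matrix.nonsing_inv_mul _ hdet, Matrix.one_mulVec]

theorem stmt_10 (n : ℕ) (hn : 1 ≤ n)
    (σ μ r : Fin n → ℝ) (rN : ℝ) (ρ L : Fin n → Fin n → ℝ)
    (hσ : ∀ i, 0 < σ i) (hLdiag : ∀ i, 0 < L i i)
    (hLtri : ∀ i j : Fin n, i < j → L i j = 0)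
    (hρsymm : ∀ i j, ρ i j = ρ j i) (hρdiag : ∀ i, ρ i i = 1)
    (hChol : ∀ i j : Fin n, ρ i j = ∑ k ∈ Finset.Iic i ∩ Finset.Iic j, L i k * L j k) :
    let N : ℝ := (n : ℝ) + 1
    -- common drift contribution of exchange rate `j`
    let Cterm : Fin n → ℝ := fun j =>
      (1 / 2) * (1 / N + 1) * (σ j) ^ 2
        + (1 / N) * σ j * ∑ k ∈ Finset.Iio j, σ k * ρ k j - μ j
    let Tsum : (Fin n → ℝ) → ℝ := fun γ =>
      ∑ j, ∑ k ∈ Finset.Iic j, σ j * L j k * γ k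
    -- the martingale (zero-excess-drift) system for `(γ, r_X)`
    let Sys : (Fin n → ℝ) × ℝ → Prop := fun q =>
      (∀ i : Fin n,
        r i - q.2 + (1 / N) * (∑ j, (Cterm j - σ i * σ j * ρ i j)) + μ i
          = -(1 / N) * Tsum q.1 + σ i * ∑ k ∈ Finset.Iic i, L i k * q.1 k)
      ∧ (rN - q.2 + (1 / N) * (∑ j, Cterm j) = -(1 / N) * Tsum q.1)
    (∃! q : (Fin n → ℝ) × ℝ, Sys q)
    ∧ (∀ q : (Fin n → ℝ) × ℝ, Sys q →
        q.2 = (1 / N) * ((∑ i, r i) + rN)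
          + (1 / (2 * N)) * (1 - 1 / N) * (∑ i, (σ i) ^ 2)
          - (1 / N) ^ 2 * ∑ k, ∑ j ∈ Finset.Iio k, σ j * σ k * ρ j k) := by
  intro N Cterm Tsum Sys
  have hNpos : (0 : ℝ) < N := by
    show (0 : ℝ) < (n : ℝ) + 1
    positivity
  have hN : N ≠ 0 := ne_of_gt hNpos
  have hσ' : ∀ i, σ i ≠ 0 := fun i => ne_of_gt (hσ i)
  -- the matrix of the triangular subsystem
  set M : Matrix (Fin n) (Fin n) ℝ := Matrix.of L with hM
  -- the right hand side
  set b : Fin n → ℝ :=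
    fun i => (r i - rN + μ i) / σ i - (1 / N) * ∑ l, σ l * ρ i l with hb
  -- truncated sums are full mulVec rows
  have hrow : ∀ (γ : Fin n → ℝ) (i : Fin n),
      ∑ k ∈ Finset.Iic i, L i k * γ k = M.mulVec γ i := by
    intro γ i
    rw [Matrix.mulVec, dotProduct]
    exact Finset.sum_subset (Finset.subset_univ _)
      (fun k _ hk => by
        rw [hLtri i k (by simpa using hk), zero_mul])
  have hσb : ∀ i : Fin n,
      σ i * b i = r i - rN + μ i - (1 / N) * σ i * ∑ l, σ l * ρ i l := by
    intro i
    have hcancel : σ i * ((r i - rN + μ i) / σ i) = r i - rN + μ i := by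
      rw [mul_comm, div_mul_cancel₀ _ (hσ' i)]
    rw [hb]
    simp only []
    rw [mul_sub, hcancel]
    ring
  -- the system is equivalent to (M γ = b) together with an explicit formula for r_X
  have hSysIff : ∀ q : (Fin n → ℝ) × ℝ, Sys q ↔
      (M.mulVec q.1 = b ∧
        q.2 = rN + (1 / N) * (∑ j, Cterm j) + (1 / N) * Tsum q.1) := by
    intro q
    constructor
    · rintro ⟨h1, h2⟩
      have hx : q.2 = rN + (1 / N) * (∑ j, Cterm j) + (1 / N) * Tsum q.1 := by
        linarith [h2]
      refine ⟨funext fun i => ?_, hx⟩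
      have hi := h1 i
      rw [Finset.sum_sub_distrib, hrow q.1 i] at hi
      have hsum : ∑ j, σ i * σ j * ρ i j = σ i * ∑ l, σ l * ρ i l := by
        rw [Finset.mul_sum]; exact Finset.sum_congr rfl fun j _ => by ring
      rw [hsum] at hi
      have : σ i * M.mulVec q.1 i = σ i * b i := by
        rw [hσb i]; linarith [hi, h2]
      exact mul_left_cancel₀ (hσ' i) this
    · rintro ⟨h1, h2⟩
      have h2' : rN - q.2 + (1 / N) * (∑ j, Cterm j) = -(1 / N) * Tsum q.1 := by
        rw [h2]; ring
      refine ⟨fun i => ?_, h2'⟩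
      rw [Finset.sum_sub_distrib, hrow q.1 i, h1]
      have hsum : ∑ j, σ i * σ j * ρ i j = σ i * ∑ l, σ l * ρ i l := by
        rw [Finset.mul_sum]; exact Finset.sum_congr rfl fun j _ => by ring
      rw [hsum]
      have := hσb i
      linarith [h2']
  -- unique solvability of the triangular system
  obtain ⟨γ0, hγ0, huniq⟩ :=
    stmt_10_tri M (fun i => ne_of_gt (hLdiag i)) (fun i j h => hLtri i j h) b
  constructor
  · refine ⟨⟨γ0, rN + (1 / N) * (∑ j, Cterm j) + (1 / N) * Tsum γ0⟩,
      (hSysIff _).2 ⟨hγ0, rfl⟩, ?_⟩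
    rintro ⟨γ, x⟩ hq
    obtain ⟨hm, hx⟩ := (hSysIff _).1 hq
    have hγ : γ = γ0 := huniq γ hm
    subst hγ
    exact Prod.ext rfl hx
  · -- the explicit value of r_X
    rintro ⟨γ, x⟩ hq
    obtain ⟨hm, hx⟩ := (hSysIff _).1 hq
    -- abbreviations
    set A : ℝ := ∑ i, r i with hA
    set B : ℝ := ∑ i, μ i with hB
    set C : ℝ := ∑ i, (σ i) ^ 2 with hC
    set S : ℝ := ∑ k, ∑ j ∈ Finset.Iio k, σ j * σ k * ρ j k with hS
    -- Tsum γ in terms of b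
    have hT : Tsum γ = ∑ j, σ j * b j := by
      show (∑ j, ∑ k ∈ Finset.Iic j, σ j * L j k * γ k) = _
      refine Finset.sum_congr rfl fun j _ => ?_
      have : ∑ k ∈ Finset.Iic j, σ j * L j k * γ k
          = σ j * ∑ k ∈ Finset.Iic j, L j k * γ k := by
        rw [Finset.mul_sum]; exact Finset.sum_congr rfl fun k _ => by ring
      rw [this, hrow γ j, hm]
    -- the symmetric double sum
    have hdouble : ∑ j, σ j * ∑ l, σ l * ρ j l = C + 2 * S := by
      have step1 : ∀ j : Fin n, σ j * ∑ l, σ l * ρ j l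
          = (σ j) ^ 2 + (∑ l ∈ Finset.Iio j, σ l * σ j * ρ l j)
            + ∑ l ∈ Finset.Ioi j, σ j * σ l * ρ j l := by
        intro j
        have hsplit : (Finset.univ : Finset (Fin n)) = Finset.Iic j ∪ Finset.Ioi j := by
          ext k; simp [le_or_gt]
        have hdisj : Disjoint (Finset.Iic j) (Finset.Ioi j) := by
          simp [Finset.disjoint_left]
        have h0 : ∑ l, σ l * ρ j l
            = (σ j * ρ j j + ∑ l ∈ Finset.Iio j, σ l * ρ j l)
              + ∑ l ∈ Finset.Ioi j, σ l * ρ j l := by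
          rw [hsplit, Finset.sum_union hdisj, ← Finset.Iio_insert j,
            Finset.sum_insert (by simp)]
        have e2 : ∀ l ∈ Finset.Iio j, σ j * (σ l * ρ j l) = σ l * σ j * ρ l j := by
          intro l _; rw [hρsymm j l]; ring
        have e3 : ∀ l ∈ Finset.Ioi j, σ j * (σ l * ρ j l) = σ j * σ l * ρ j l := by
          intro l _; ring
        rw [h0, hρdiag j, mul_add, mul_add, Finset.mul_sum, Finset.mul_sum,
          Finset.sum_congr rfl e2, Finset.sum_congr rfl e3]
        ring
      rw [Finset.sum_congr rfl fun j _ => step1 j,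
        Finset.sum_add_distrib, Finset.sum_add_distrib]
      have hswap : ∑ j, ∑ l ∈ Finset.Ioi j, σ j * σ l * ρ j l
          = ∑ l, ∑ j ∈ Finset.Iio l, σ j * σ l * ρ j l := by
        refine Finset.sum_comm' ?_
        intro j l
        simp [Finset.mem_Ioi, Finset.mem_Iio]
      rw [hswap, ← hC, ← hS]
      ring
    -- sum over Cterm
    have hCterm : ∑ j, Cterm j = (1 / 2) * (1 / N + 1) * C + (1 / N) * S - B := by
      show (∑ j, ((1 / 2) * (1 / N + 1) * (σ j) ^ 2
          + (1 / N) * σ j * ∑ k ∈ Finset.Iio j, σ k * ρ k j - μ j)) = _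
      rw [Finset.sum_sub_distrib, Finset.sum_add_distrib, ← Finset.mul_sum, ← hC, ← hB]
      have : ∑ j, (1 / N) * σ j * ∑ k ∈ Finset.Iio j, σ k * ρ k j = (1 / N) * S := by
        rw [hS, Finset.mul_sum]
        refine Finset.sum_congr rfl fun j _ => ?_
        rw [Finset.mul_sum, Finset.mul_sum]
        refine Finset.sum_congr rfl fun k _ => ?_
        ring
      rw [this]
    -- sum over σ b
    have hsb : ∑ j, σ j * b j = A + B - (n : ℝ) * rN - (1 / N) * (C + 2 * S) := by
      rw [Finset.sum_congr rfl fun j _ => hσb j]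
      rw [Finset.sum_sub_distrib]
      have h1 : ∑ j, (r j - rN + μ j) = A - (n : ℝ) * rN + B := by
        rw [Finset.sum_add_distrib, Finset.sum_sub_distrib, ← hA, ← hB]
        simp [Finset.card_univ, mul_comm]
      have h2 : ∑ j, (1 / N) * σ j * ∑ l, σ l * ρ j l = (1 / N) * (C + 2 * S) := by
        rw [← hdouble, Finset.mul_sum]
        refine Finset.sum_congr rfl fun j _ => ?_
        ring
      rw [h1, h2]
      ring
    -- put everything together
    have hn' : (n : ℝ) = N - 1 := by
      show (n : ℝ) = (n : ℝ) + 1 - 1; ring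
    have hx' : x = rN + (1 / N) * (∑ j, Cterm j) + (1 / N) * Tsum γ := hx
    show x = (1 / N) * (A + rN) + (1 / (2 * N)) * (1 - 1 / N) * C - (1 / N) ^ 2 * S
    rw [hx', hT, hCterm, hsb, hn']
    field_simp
    ring
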